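/- Let u : [0,∞) → ℝ^N be differentiable and satisfy the LCA dynamics τ·u̇(t) = −u(t) − (ΦᵀΦ − I)·T_λ(u(t)) + Φᵀy for all t ≥ 0, and let u* be a fixed point, i.e. 0 = −u* − (ΦᵀΦ − I)·T_λ(u*) + Φᵀy, with a* := T_λ(u*) and Γ* := {n : a*_n ≠ 0}. Assume: (a) there is α > 0 with |f'(v)| ≤ α for all v in the interior of D; (b) there is δ ≥ 0 with αδ < 1 such that for every t ≥ 0 and every x ∈ ℝ^N supported on Γ(t) ∪ Γ*, where Γ(t) = {n : |u_n(t)| > λ}, one has (1 − δ)‖x‖₂² ≤ ‖Φx‖₂² ≤ (1 + δ)‖x‖₂². Then the output converges exponentially: ‖T_λ(u(t)) − a*‖₂ ≤ α·‖u(0) − u*‖₂·e^{−(1−αδ)t/τ} for all t ≥ 0. -/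

import Mathlib

open Matrix

/-- The generic thresholding activation function `T_λ` built from `f`. -/
noncomputable def Tl (lam : ℝ) (f : ℝ → ℝ) (u : ℝ) : ℝ :=
  if |u| ≤ lam then 0 else f u

namespace Stmt8Aux

/-- soft threshold -/
noncomputable def Sl (lam v : ℝ) : ℝ :=
  if v < -lam then v + lam else if v ≤ lam then 0 else v - lam

lemma Sl_of_abs_le {lam v : ℝ} (h : |v| ≤ lam) : Sl lam v = 0 := by
  have h' := abs_le.1 h
  unfold Sl; split_ifs <;> linarith [h'.1, h'.2]

lemma Sl_mono {lam : ℝ} (hlam : 0 ≤ lam) : Monotone (Sl lam) := by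
  intro b a h; unfold Sl; split_ifs <;> linarith

lemma Sl_lip {lam : ℝ} (hlam : 0 ≤ lam) {a b : ℝ} (h : b ≤ a) :
    Sl lam a - Sl lam b ≤ a - b := by
  unfold Sl; split_ifs <;> linarith

lemma Sl_abs_sub {lam : ℝ} (hlam : 0 ≤ lam) (a b : ℝ) : |Sl lam a - Sl lam b| ≤ |a - b| := by
  rcases le_total b a with h | h
  · rw [abs_of_nonneg (sub_nonneg.2 (Sl_mono hlam h)), abs_of_nonneg (sub_nonneg.2 h)]
    exact Sl_lip hlam h
  · rw [abs_of_nonpos (sub_nonpos.2 (Sl_mono hlam h)), abs_of_nonpos (sub_nonpos.2 h)]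
    linarith [Sl_lip hlam h]

lemma Sl_mul_ge {lam : ℝ} (hlam : 0 ≤ lam) {x y : ℝ} (hy : |y| ≤ lam) :
    Sl lam x ^ 2 ≤ Sl lam x * (x - y) := by
  have h' := abs_le.1 hy
  unfold Sl; split_ifs <;> nlinarith [h'.1, h'.2]

lemma Sl_hi {lam x : ℝ} (hlam : 0 ≤ lam) (h : lam < x) : Sl lam x = x - lam := by
  unfold Sl; split_ifs <;> linarith

lemma Sl_lo {lam x : ℝ} (hlam : 0 ≤ lam) (h : x < -lam) : Sl lam x = x + lam := by
  unfold Sl; split_ifs <;> linarith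

lemma Sl_sq {lam : ℝ} (hlam : 0 ≤ lam) (v : ℝ) :
    Sl lam v ^ 2 = max (v - lam) 0 ^ 2 + min (v + lam) 0 ^ 2 := by
  unfold Sl
  split_ifs with h1 h2
  · rw [max_eq_right (by linarith : v - lam ≤ 0), min_eq_left (by linarith : v + lam ≤ 0)]; ring
  · rw [max_eq_right (by linarith : v - lam ≤ 0), min_eq_right (by linarith : (0:ℝ) ≤ v + lam)]
    ring
  · rw [max_eq_left (by linarith : (0:ℝ) ≤ v - lam), min_eq_right (by linarith : (0:ℝ) ≤ v + lam)]
    ring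

lemma Sl_eq_maxmin {lam : ℝ} (hlam : 0 ≤ lam) (v : ℝ) :
    Sl lam v = max (v - lam) 0 + min (v + lam) 0 := by
  unfold Sl
  split_ifs with h1 h2
  · rw [max_eq_right (by linarith : v - lam ≤ 0), min_eq_left (by linarith : v + lam ≤ 0)]; ring
  · rw [max_eq_right (by linarith : v - lam ≤ 0), min_eq_right (by linarith : (0:ℝ) ≤ v + lam)]
    ring
  · rw [max_eq_left (by linarith : (0:ℝ) ≤ v - lam), min_eq_right (by linarith : (0:ℝ) ≤ v + lam)]
    ring

lemma hasDerivAt_maxsq (x : ℝ) : HasDerivAt (fun y : ℝ => max y 0 ^ 2) (2 * max x 0) x := by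
  rcases lt_trichotomy x 0 with hx | hx | hx
  · have hev : (fun y : ℝ => max y 0 ^ 2) =ᶠ[nhds x] fun _ => (0 : ℝ) := by
      filter_upwards [Iio_mem_nhds hx] with y hy
      rw [max_eq_right (le_of_lt hy)]; ring
    have h0 := (hasDerivAt_const x (0 : ℝ)).congr_of_eventuallyEq hev
    rw [show (2 * max x 0) = 0 by rw [max_eq_right hx.le]; ring]; exact h0
  · subst hx
    rw [hasDerivAt_iff_isLittleO]
    rw [Asymptotics.isLittleO_iff]
    intro cc hcc
    filter_upwards [Metric.closedBall_mem_nhds (0 : ℝ) hcc] with y hy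
    rw [Metric.mem_closedBall, Real.dist_eq, sub_zero] at hy
    simp only [smul_eq_mul, sub_zero, max_self, Real.norm_eq_abs]
    rcases le_total y 0 with h | h
    · rw [max_eq_right h]
      simp only [ne_eq, OfNat.ofNat_ne_zero, not_false_eq_true, zero_pow, mul_zero, sub_zero,
        abs_zero]
      positivity
    · rw [max_eq_left h]
      have hyc : y ≤ cc := by rwa [abs_of_nonneg h] at hy
      have he : y ^ 2 - 0 ^ 2 - y * (2 * 0) = y ^ 2 := by ring
      rw [he, abs_of_nonneg (by positivity : (0:ℝ) ≤ y ^ 2), abs_of_nonneg h]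
      nlinarith
  · have hev : (fun y : ℝ => max y 0 ^ 2) =ᶠ[nhds x] fun y => y ^ 2 := by
      filter_upwards [Ioi_mem_nhds hx] with y hy
      rw [max_eq_left (le_of_lt hy)]
    have h0 := (hasDerivAt_pow 2 x).congr_of_eventuallyEq hev
    rw [show (2 * max x 0) = ((2:ℕ):ℝ) * x ^ (2 - 1) by rw [max_eq_left hx.le]; push_cast; ring]
    exact h0

lemma hasDerivAt_minsq (x : ℝ) : HasDerivAt (fun y : ℝ => min y 0 ^ 2) (2 * min x 0) x := by
  have h1 : ∀ y : ℝ, min y 0 = -max (-y) 0 := by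
    intro y
    rcases le_total y 0 with h | h
    · rw [min_eq_left h, max_eq_left (by linarith : (0:ℝ) ≤ -y)]; ring
    · rw [min_eq_right h, max_eq_right (by linarith : -y ≤ (0:ℝ))]; ring
  have h2 : HasDerivAt (fun y : ℝ => max (-y) 0 ^ 2) (2 * max (-x) 0 * (-1)) x := by
    have := (hasDerivAt_maxsq (-x)).comp x (hasDerivAt_neg x)
    exact this
  have h3 : (fun y : ℝ => min y 0 ^ 2) = fun y : ℝ => max (-y) 0 ^ 2 := by
    funext y; rw [h1 y]; ring
  rw [h3, h1 x]
  convert h2 using 1; ring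

lemma sum_sq_sub_sum_sq {ι : Type*} [Fintype ι] {s : ℝ} (hs : s ≠ 0) (p q : ι → ℝ) :
    ((∑ i, (s * p i + s⁻¹ * q i) ^ 2) - ∑ i, (s * p i - s⁻¹ * q i) ^ 2)
      = 4 * ∑ i, p i * q i := by
  rw [← Finset.sum_sub_distrib, Finset.mul_sum]
  apply Finset.sum_congr rfl
  intro i _
  have h : s * s⁻¹ = 1 := mul_inv_cancel₀ hs
  linear_combination (4 * p i * q i) * h

lemma sum_sq_add_sum_sq {ι : Type*} [Fintype ι] (s : ℝ) (p q : ι → ℝ) :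
    ((∑ i, (s * p i + s⁻¹ * q i) ^ 2) + ∑ i, (s * p i - s⁻¹ * q i) ^ 2)
      = 2 * (s ^ 2 * ∑ i, p i ^ 2 + (s⁻¹) ^ 2 * ∑ i, q i ^ 2) := by
  have h1 : ((∑ i, (s * p i + s⁻¹ * q i) ^ 2) + ∑ i, (s * p i - s⁻¹ * q i) ^ 2)
      = ∑ i, (2 * (s ^ 2 * p i ^ 2 + (s⁻¹) ^ 2 * q i ^ 2)) := by
    rw [← Finset.sum_add_distrib]; exact Finset.sum_congr rfl fun i _ => by ring
  rw [h1]
  simp only [mul_add, Finset.mul_sum, ← Finset.sum_add_distrib]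

end Stmt8Aux

open Stmt8Aux

set_option maxHeartbeats 1600000 in
/-- under the bound `|f'| ≤ α` and the restricted-isometry-type
condition with constant `δ` (with `αδ < 1`) on vectors supported on
`Γ(t) ∪ Γ*`, the LCA output converges exponentially:
`‖T_λ(u(t)) − a*‖₂ ≤ α‖u(0) − u*‖₂ e^{−(1−αδ)t/τ}`. -/
theorem stmt8 {M N : ℕ} (hM : 0 < M) (hN : 0 < N)
    (Φ : Matrix (Fin M) (Fin N) ℝ) (y : Fin M → ℝ)
    (lam : ℝ) (hlam : 0 < lam) (τ : ℝ) (hτ : 0 < τ) (f : ℝ → ℝ)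
    (hf_cont : ContinuousOn f {v : ℝ | lam ≤ |v|})
    (hf_diff : ∀ v : ℝ, lam < |v| → DifferentiableAt ℝ f v)
    (hf_odd : ∀ v : ℝ, lam ≤ |v| → f (-v) = -f v)
    (hf_lam : f lam = 0)
    (hf_pos : ∀ v : ℝ, lam < |v| → 0 < deriv f v)
    (hf_le : ∀ v : ℝ, lam ≤ v → f v ≤ v)
    (α : ℝ) (hα : 0 < α)
    (hf_bound : ∀ v : ℝ, lam < |v| → |deriv f v| ≤ α)
    (u u' : ℝ → Fin N → ℝ)
    (hderiv : ∀ t : ℝ, 0 ≤ t → HasDerivWithinAt u (u' t) (Set.Ici 0) t)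
    (hdyn : ∀ t : ℝ, 0 ≤ t →
      τ • u' t =
        -(u t) - (Φᵀ * Φ - 1) *ᵥ (fun n => Tl lam f (u t n)) + Φᵀ *ᵥ y)
    (ustar : Fin N → ℝ)
    (hfix : (0 : Fin N → ℝ) =
      -ustar - (Φᵀ * Φ - 1) *ᵥ (fun n => Tl lam f (ustar n)) + Φᵀ *ᵥ y)
    (δ : ℝ) (hδ : 0 ≤ δ) (hαδ : α * δ < 1)
    (hRIP : ∀ t : ℝ, 0 ≤ t → ∀ x : Fin N → ℝ,
      (∀ n : Fin N, |u t n| ≤ lam → Tl lam f (ustar n) = 0 → x n = 0) →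
      (1 - δ) * ∑ n, x n ^ 2 ≤ ∑ m, ((Φ *ᵥ x) m) ^ 2 ∧
        ∑ m, ((Φ *ᵥ x) m) ^ 2 ≤ (1 + δ) * ∑ n, x n ^ 2) :
    ∀ t : ℝ, 0 ≤ t →
      Real.sqrt (∑ n, (Tl lam f (u t n) - Tl lam f (ustar n)) ^ 2) ≤
        α * Real.sqrt (∑ n, (u 0 n - ustar n) ^ 2) *
          Real.exp (-(1 - α * δ) * t / τ) := by
  have hlam0 : (0:ℝ) ≤ lam := hlam.le
  -- facts about f
  have hsub : Set.Ici lam ⊆ {v : ℝ | lam ≤ |v|} := fun v hv => le_trans hv (le_abs_self v)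
  have hconIci : ContinuousOn f (Set.Ici lam) := hf_cont.mono hsub
  have hdiffIoi : ∀ x ∈ Set.Ioi lam, DifferentiableAt ℝ f x := fun x hx =>
    hf_diff x (lt_of_lt_of_le hx (le_abs_self x))
  have hfsm : StrictMonoOn f (Set.Ici lam) := by
    apply strictMonoOn_of_deriv_pos (convex_Ici lam) hconIci
    intro x hx
    rw [interior_Ici] at hx
    exact hf_pos x (lt_of_lt_of_le hx (le_abs_self x))
  have hfpos : ∀ t : ℝ, lam < t → 0 < f t := by
    intro t ht
    have := hfsm Set.self_mem_Ici (Set.mem_Ici.2 ht.le) ht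
    rwa [hf_lam] at this
  have hfmono : MonotoneOn f (Set.Ici lam) := hfsm.monotoneOn
  have hfnn : ∀ t : ℝ, lam ≤ t → 0 ≤ f t := by
    intro t ht
    have := hfmono Set.self_mem_Ici (Set.mem_Ici.2 ht) ht
    rwa [hf_lam] at this
  have hmono2 : MonotoneOn (fun x => α * x - f x) (Set.Ici lam) := by
    apply monotoneOn_of_deriv_nonneg (convex_Ici lam)
    · exact (continuous_const.mul continuous_id).continuousOn.sub hconIci
    · intro x hx
      rw [interior_Ici] at hx
      exact (((differentiable_id.const_mul α) x).sub (hdiffIoi x hx)).differentiableWithinAt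
    · intro x hx
      rw [interior_Ici] at hx
      have hdx := hdiffIoi x hx
      have hb := (abs_le.1 (hf_bound x (lt_of_lt_of_le hx (le_abs_self x)))).2
      have hD : HasDerivAt (fun x : ℝ => α * x - f x) (α * 1 - deriv f x) x :=
        ((hasDerivAt_id x).const_mul α).sub hdx.hasDerivAt
      rw [hD.deriv]
      linarith
  have hC1 : ∀ s t : ℝ, lam ≤ s → s ≤ t → f t - f s ≤ α * (t - s) := by
    intro s t hs hst
    have := hmono2 (Set.mem_Ici.2 hs) (Set.mem_Ici.2 (hs.trans hst)) hst
    simp only at this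
    nlinarith [this]
  have hC2 : ∀ t : ℝ, lam ≤ t → f t ≤ α * (t - lam) := by
    intro t ht
    have := hC1 lam t le_rfl ht
    rw [hf_lam] at this
    linarith
  have hodd : ∀ v : ℝ, lam ≤ v → f (-v) = -f v := fun v hv =>
    hf_odd v (le_trans hv (le_abs_self v))
  -- facts about Tl
  have hTl_mid : ∀ x : ℝ, |x| ≤ lam → Tl lam f x = 0 := fun x h => if_pos h
  have hTl_hi : ∀ x : ℝ, lam < x → Tl lam f x = f x := fun x h =>
    if_neg (not_le.2 (lt_of_lt_of_le h (le_abs_self x)))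
  have hTl_lo : ∀ x : ℝ, x < -lam → Tl lam f x = f x := fun x h =>
    if_neg (not_le.2 (lt_of_lt_of_le (by linarith) (neg_le_abs x)))
  have hTl_lo' : ∀ x : ℝ, x < -lam → Tl lam f x = -f (-x) := by
    intro x h
    rw [hTl_lo x h]
    have := hodd (-x) (by linarith)
    rw [neg_neg] at this
    exact this
  have hTl_zero : ∀ x : ℝ, Tl lam f x = 0 → |x| ≤ lam := by
    intro x hx
    by_contra h
    push_neg at h
    rcases lt_or_ge lam x with h1 | h1
    · rw [hTl_hi x h1] at hx
      exact (hfpos x h1).ne' hx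
    · have h2 : x < -lam := by
        rcases le_or_gt 0 x with h0 | h0
        · rw [abs_of_nonneg h0] at h; linarith
        · rw [abs_of_neg h0] at h; linarith
      rw [hTl_lo' x h2] at hx
      have h3 : 0 < f (-x) := hfpos (-x) (by linarith)
      linarith [neg_eq_zero.1 hx]
  have hTl_mono : ∀ a b : ℝ, b ≤ a → Tl lam f b ≤ Tl lam f a := by
    intro a b h
    rcases lt_or_ge lam b with hb | hb
    · rw [hTl_hi b hb, hTl_hi a (lt_of_lt_of_le hb h)]
      exact hfmono (Set.mem_Ici.2 hb.le) (Set.mem_Ici.2 (hb.le.trans h)) h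
    · rcases lt_or_ge a (-lam) with ha | ha
      · rw [hTl_lo' b (lt_of_le_of_lt h ha), hTl_lo' a ha]
        have := hfmono (Set.mem_Ici.2 (by linarith : lam ≤ -a))
          (Set.mem_Ici.2 (by linarith : lam ≤ -b)) (by linarith)
        linarith
      · have h1 : Tl lam f b ≤ 0 := by
          rcases lt_or_ge b (-lam) with hb2 | hb2
          · rw [hTl_lo' b hb2]
            have := hfnn (-b) (by linarith)
            linarith
          · rw [hTl_mid b (abs_le.2 ⟨hb2, hb⟩)]
        have h2 : 0 ≤ Tl lam f a := by
          rcases lt_or_ge lam a with ha2 | ha2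
          · rw [hTl_hi a ha2]
            exact hfnn a ha2.le
          · rw [hTl_mid a (abs_le.2 ⟨by linarith, ha2⟩)]
        linarith
  -- key comparison between Tl and Sl
  have hkey : ∀ a b : ℝ, b ≤ a → Tl lam f a - Tl lam f b ≤ α * (Sl lam a - Sl lam b) := by
    intro a b h
    rcases lt_or_ge lam b with hb | hb
    · have ha := lt_of_lt_of_le hb h
      rw [hTl_hi b hb, hTl_hi a ha, Sl_hi hlam0 hb, Sl_hi hlam0 ha]
      have h1 := hC1 b a hb.le h
      nlinarith [h1]
    · rcases lt_or_ge b (-lam) with hb2 | hb2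
      · rcases lt_or_ge lam a with ha | ha
        · rw [hTl_hi a ha, hTl_lo' b hb2, Sl_hi hlam0 ha, Sl_lo hlam0 hb2]
          have h1 := hC2 a ha.le
          have h2 := hC2 (-b) (by linarith)
          nlinarith [h1, h2]
        · rcases lt_or_ge a (-lam) with ha2 | ha2
          · rw [hTl_lo' a ha2, hTl_lo' b hb2, Sl_lo hlam0 ha2, Sl_lo hlam0 hb2]
            have h1 := hC1 (-a) (-b) (by linarith) (by linarith)
            nlinarith [h1]
          · rw [hTl_mid a (abs_le.2 ⟨ha2, ha⟩), hTl_lo' b hb2,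
              Sl_of_abs_le (abs_le.2 ⟨ha2, ha⟩), Sl_lo hlam0 hb2]
            have h2 := hC2 (-b) (by linarith)
            nlinarith [h2]
      · rw [hTl_mid b (abs_le.2 ⟨hb2, hb⟩), Sl_of_abs_le (abs_le.2 ⟨hb2, hb⟩)]
        rcases lt_or_ge lam a with ha | ha
        · rw [hTl_hi a ha, Sl_hi hlam0 ha]
          have h1 := hC2 a ha.le
          nlinarith [h1]
        · rw [hTl_mid a (abs_le.2 ⟨by linarith, ha⟩), Sl_of_abs_le (abs_le.2 ⟨by linarith, ha⟩)]
          simp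
  have habs_key : ∀ p q : ℝ, |Tl lam f p - Tl lam f q| ≤ α * |Sl lam p - Sl lam q| := by
    intro p q
    rcases le_total q p with h | h
    · rw [abs_of_nonneg (sub_nonneg.2 (hTl_mono p q h)),
        abs_of_nonneg (sub_nonneg.2 (Sl_mono hlam0 h))]
      exact hkey p q h
    · rw [abs_of_nonpos (sub_nonpos.2 (hTl_mono q p h)),
        abs_of_nonpos (sub_nonpos.2 (Sl_mono hlam0 h))]
      have := hkey q p h
      linarith
  -- setup
  set c : ℝ := 1 - α * δ with hc_def
  have hc : 0 < c := by rw [hc_def]; linarith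
  set astar : Fin N → ℝ := fun n => Tl lam f (ustar n) with hastar_def
  have hastar_n : ∀ n, astar n = Tl lam f (ustar n) := fun n => rfl
  set z : ℝ → Fin N → ℝ := fun t n => Tl lam f (u t n) - astar n with hz_def
  have hz_n : ∀ t n, z t n = Tl lam f (u t n) - Tl lam f (ustar n) := fun t n => rfl
  set w : ℝ → Fin N → ℝ :=
    fun t n => if astar n = 0 then Sl lam (u t n) else u t n - ustar n with hw_def
  have hw_n : ∀ t n, w t n = if astar n = 0 then Sl lam (u t n) else u t n - ustar n :=
    fun t n => rfl
  set G : Fin N → ℝ → ℝ := fun n v =>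
    if astar n = 0 then (max (v - lam) 0 ^ 2 + min (v + lam) 0 ^ 2) / 2
    else (v - ustar n) ^ 2 / 2 with hG_def
  have hG_n : ∀ n v, G n v =
      (if astar n = 0 then (max (v - lam) 0 ^ 2 + min (v + lam) 0 ^ 2) / 2
       else (v - ustar n) ^ 2 / 2) := fun n v => rfl
  set W : ℝ → ℝ := fun t => ∑ n, G n (u t n) with hW_def
  have hW_n : ∀ t, W t = ∑ n, G n (u t n) := fun t => rfl
  have hustar_mid : ∀ n, astar n = 0 → |ustar n| ≤ lam := fun n h => hTl_zero _ h
  have hGval : ∀ n (x : ℝ), G n x = (if astar n = 0 then Sl lam x else x - ustar n) ^ 2 / 2 := by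
    intro n x
    rw [hG_n]
    by_cases h : astar n = 0
    · rw [if_pos h, if_pos h, Sl_sq hlam0]
    · rw [if_neg h, if_neg h]
  have hWval : ∀ t, W t = (∑ n, w t n ^ 2) / 2 := by
    intro t
    calc W t = ∑ n, w t n ^ 2 / 2 := by
          rw [hW_n]
          refine Finset.sum_congr rfl fun n _ => ?_
          rw [hGval n (u t n), ← hw_n]
      _ = (∑ n, w t n ^ 2) / 2 := by rw [Finset.sum_div]
  have hw0 : ∀ t n, |u t n| ≤ lam → astar n = 0 → w t n = 0 := by
    intro t n h1 h2
    rw [hw_n, if_pos h2]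
    exact Sl_of_abs_le h1
  have hz0 : ∀ t n, |u t n| ≤ lam → astar n = 0 → z t n = 0 := by
    intro t n h1 h2
    rw [hz_n, hTl_mid _ h1, ← hastar_n, h2, sub_zero]
  have hzw : ∀ t n, |z t n| ≤ α * |w t n| := by
    intro t n
    by_cases h : astar n = 0
    · rw [hz_n, hw_n, if_pos h]
      have e3 : Sl lam (ustar n) = 0 := Sl_of_abs_le (hustar_mid n h)
      have h1 := habs_key (u t n) (ustar n)
      rwa [e3, sub_zero] at h1
    · rw [hz_n, hw_n, if_neg h]
      exact le_trans (habs_key _ _)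
        (mul_le_mul_of_nonneg_left (Sl_abs_sub hlam0 _ _) hα.le)
  have hzw2 : ∀ t n, z t n ^ 2 ≤ α ^ 2 * w t n ^ 2 := by
    intro t n
    have h := hzw t n
    have h2 : |z t n| ^ 2 ≤ (α * |w t n|) ^ 2 := pow_le_pow_left₀ (abs_nonneg _) h 2
    rwa [sq_abs, mul_pow, sq_abs] at h2
  have hwv : ∀ t n, w t n ^ 2 ≤ w t n * (u t n - ustar n) := by
    intro t n
    by_cases h : astar n = 0
    · rw [hw_n, if_pos h]
      exact Sl_mul_ge hlam0 (hustar_mid n h)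
    · rw [hw_n, if_neg h, sq]
  -- componentwise dynamics of the difference
  have hdyn' : ∀ t : ℝ, 0 ≤ t → ∀ n,
      τ * u' t n = -(u t n - ustar n) - ((Φᵀ * Φ - 1) *ᵥ z t) n := by
    intro t ht n
    have h1 := hdyn t ht
    have h4 : τ • u' t =
        (-(u t) - (Φᵀ * Φ - 1) *ᵥ (fun n => Tl lam f (u t n)) + Φᵀ *ᵥ y)
          - (-ustar - (Φᵀ * Φ - 1) *ᵥ astar + Φᵀ *ᵥ y) := by
      rw [h1]
      have := congrArg
        (fun q => (-(u t) - (Φᵀ * Φ - 1) *ᵥ (fun n => Tl lam f (u t n)) + Φᵀ *ᵥ y) - q) hfix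
      simpa using this
    have h5 := congrFun h4 n
    simp only [Pi.smul_apply, smul_eq_mul, Pi.sub_apply, Pi.add_apply, Pi.neg_apply] at h5
    have h6 : ((Φᵀ * Φ - 1) *ᵥ z t) n
        = ((Φᵀ * Φ - 1) *ᵥ (fun m => Tl lam f (u t m))) n - ((Φᵀ * Φ - 1) *ᵥ astar) n := by
      have e : z t = (fun m => Tl lam f (u t m)) - astar := by
        funext m
        simp [hz_n, hastar_n]
      rw [e, Matrix.mulVec_sub]
      simp
    rw [h6]
    linarith [h5]
  -- the core differential inequality
  have hmain : ∀ t : ℝ, 0 ≤ t → ∑ n, w t n * u' t n ≤ -(2 * c / τ) * W t := by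
    intro t ht
    have hs0 : (0:ℝ) < Real.sqrt α := Real.sqrt_pos.2 hα
    have hs2 : Real.sqrt α ^ 2 = α := Real.sq_sqrt hα.le
    set s : ℝ := Real.sqrt α with hs_def
    have hxp_supp : ∀ n, |u t n| ≤ lam → Tl lam f (ustar n) = 0 →
        (fun n => s * w t n + s⁻¹ * z t n) n = 0 := by
      intro n h1 h2
      have h2' : astar n = 0 := by rw [hastar_n]; exact h2
      simp only
      rw [hw0 t n h1 h2', hz0 t n h1 h2']
      ring
    have hxm_supp : ∀ n, |u t n| ≤ lam → Tl lam f (ustar n) = 0 →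
        (fun n => s * w t n - s⁻¹ * z t n) n = 0 := by
      intro n h1 h2
      have h2' : astar n = 0 := by rw [hastar_n]; exact h2
      simp only
      rw [hw0 t n h1 h2', hz0 t n h1 h2']
      ring
    obtain ⟨hp1, hp2⟩ := hRIP t ht _ hxp_supp
    obtain ⟨hm1, hm2⟩ := hRIP t ht _ hxm_supp
    have hPhip : Φ *ᵥ (fun n => s * w t n + s⁻¹ * z t n)
        = fun m => s * (Φ *ᵥ w t) m + s⁻¹ * (Φ *ᵥ z t) m := by
      funext m
      simp only [Matrix.mulVec, dotProduct]
      rw [Finset.mul_sum, Finset.mul_sum, ← Finset.sum_add_distrib]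
      exact Finset.sum_congr rfl fun n _ => by ring
    have hPhim : Φ *ᵥ (fun n => s * w t n - s⁻¹ * z t n)
        = fun m => s * (Φ *ᵥ w t) m - s⁻¹ * (Φ *ᵥ z t) m := by
      funext m
      simp only [Matrix.mulVec, dotProduct]
      rw [Finset.mul_sum, Finset.mul_sum, ← Finset.sum_sub_distrib]
      exact Finset.sum_congr rfl fun n _ => by ring
    rw [hPhip] at hp1 hp2
    rw [hPhim] at hm1 hm2
    simp only at hp1 hp2 hm1 hm2
    -- abbreviations for the sums
    have hSzle : (∑ n, z t n ^ 2) ≤ α ^ 2 * ∑ n, w t n ^ 2 := by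
      rw [Finset.mul_sum]
      exact Finset.sum_le_sum fun n _ => hzw2 t n
    have hSwnn : (0:ℝ) ≤ ∑ n, w t n ^ 2 := Finset.sum_nonneg fun n _ => sq_nonneg _
    have hsub4 := sum_sq_sub_sum_sq hs0.ne' (Φ *ᵥ w t) (Φ *ᵥ z t)
    have hsubN := sum_sq_sub_sum_sq hs0.ne' (w t) (z t)
    have haddN := sum_sq_add_sum_sq s (w t) (z t)
    have hsinv : (s⁻¹) ^ 2 = α⁻¹ := by
      rw [← hs2]; rw [inv_pow]
    have hainv : α⁻¹ * (∑ n, z t n ^ 2) ≤ α * ∑ n, w t n ^ 2 := by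
      have h0 : α⁻¹ * (∑ n, z t n ^ 2) ≤ α⁻¹ * (α ^ 2 * ∑ n, w t n ^ 2) :=
        mul_le_mul_of_nonneg_left hSzle (inv_nonneg.2 hα.le)
      calc α⁻¹ * (∑ n, z t n ^ 2) ≤ α⁻¹ * (α ^ 2 * ∑ n, w t n ^ 2) := h0
        _ = α * ∑ n, w t n ^ 2 := by field_simp
    -- the RIP-polarization bound
    have hBound : (∑ m, (Φ *ᵥ w t) m * (Φ *ᵥ z t) m) - (∑ n, w t n * z t n)
        ≥ -(α * δ) * ∑ n, w t n ^ 2 := by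
      have e1 : (∑ n, (s * w t n + s⁻¹ * z t n) ^ 2) + (∑ n, (s * w t n - s⁻¹ * z t n) ^ 2)
          ≤ 4 * (α * ∑ n, w t n ^ 2) := by
        rw [haddN, hs2, hsinv]
        linarith [hainv]
      linarith [hp1, hm2, hsub4, hsubN, mul_le_mul_of_nonneg_left e1 hδ]
    -- dot-product identity
    have hdot : (∑ n, w t n * ((Φᵀ * Φ - 1) *ᵥ z t) n)
        = (∑ m, (Φ *ᵥ w t) m * (Φ *ᵥ z t) m) - ∑ n, w t n * z t n := by
      have h1 : (Φᵀ * Φ - 1) *ᵥ z t = Φᵀ *ᵥ (Φ *ᵥ z t) - z t := by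
        rw [Matrix.sub_mulVec, Matrix.one_mulVec, Matrix.mulVec_mulVec]
      rw [h1]
      have h2 : (∑ n, w t n * (Φᵀ *ᵥ (Φ *ᵥ z t) - z t) n)
          = (∑ n, w t n * (Φᵀ *ᵥ (Φ *ᵥ z t)) n) - ∑ n, w t n * z t n := by
        rw [← Finset.sum_sub_distrib]
        exact Finset.sum_congr rfl fun n _ => by simp [Pi.sub_apply]; ring
      rw [h2]
      have h3 : (w t) ⬝ᵥ (Φᵀ *ᵥ (Φ *ᵥ z t)) = (Φ *ᵥ w t) ⬝ᵥ (Φ *ᵥ z t) := by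
        rw [dotProduct_mulVec, Matrix.vecMul_transpose]
      have h4 : (∑ n, w t n * (Φᵀ *ᵥ (Φ *ᵥ z t)) n) = ∑ m, (Φ *ᵥ w t) m * (Φ *ᵥ z t) m := h3
      rw [h4]
    -- putting it together
    have hstep : τ * (∑ n, w t n * u' t n) ≤ -(2 * c) * W t := by
      have e1 : τ * (∑ n, w t n * u' t n) = ∑ n, w t n * (τ * u' t n) := by
        rw [Finset.mul_sum]
        exact Finset.sum_congr rfl fun n _ => by ring
      rw [e1]
      have e2 : ∀ n, w t n * (τ * u' t n)
          = -(w t n * (u t n - ustar n)) - w t n * ((Φᵀ * Φ - 1) *ᵥ z t) n := by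
        intro n
        rw [hdyn' t ht n]
        ring
      rw [Finset.sum_congr rfl fun n _ => e2 n, Finset.sum_sub_distrib, Finset.sum_neg_distrib]
      have h4 : (∑ n, w t n ^ 2) ≤ ∑ n, w t n * (u t n - ustar n) :=
        Finset.sum_le_sum fun n _ => hwv t n
      have h5 : (∑ n, w t n * ((Φᵀ * Φ - 1) *ᵥ z t) n) ≥ -(α * δ) * ∑ n, w t n ^ 2 := by
        rw [hdot]; exact hBound
      have h6 : W t = (∑ n, w t n ^ 2) / 2 := hWval t
      have h7 : -(2 * c) * W t = -(1 - α * δ) * ∑ n, w t n ^ 2 := by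
        rw [h6, hc_def]; ring
      rw [h7]
      linarith [h4, h5]
    have h8 : -(2 * c / τ) * W t = (-(2 * c) * W t) / τ := by ring
    rw [h8, le_div_iff₀ hτ, mul_comm]
    exact hstep
  -- continuity
  have hu_cont : ContinuousOn u (Set.Ici 0) := fun t ht => (hderiv t ht).continuousWithinAt
  have hGcont : ∀ n, Continuous (G n) := by
    intro n
    by_cases h : astar n = 0
    · have e : G n = fun v => (max (v - lam) 0 ^ 2 + min (v + lam) 0 ^ 2) / 2 := by
        funext v; rw [hG_n, if_pos h]
      rw [e]
      exact ((((continuous_id.sub continuous_const).max continuous_const).pow 2).add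
        (((continuous_id.add continuous_const).min continuous_const).pow 2)).div_const 2
    · have e : G n = fun v => (v - ustar n) ^ 2 / 2 := by
        funext v; rw [hG_n, if_neg h]
      rw [e]
      exact (((continuous_id.sub continuous_const)).pow 2).div_const 2
  have hWcont : ContinuousOn W (Set.Ici 0) := by
    have h1 : Continuous fun v : Fin N → ℝ => ∑ n, G n (v n) :=
      continuous_finset_sum _ fun n _ => (hGcont n).comp (continuous_apply n)
    exact h1.comp_continuousOn hu_cont
  set k : ℝ := 2 * c / τ with hk_def
  have hk : 0 < k := by rw [hk_def]; positivity
  set F : ℝ → ℝ := fun t => W t * Real.exp (k * t) with hF_def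
  have hF_deriv : ∀ t : ℝ, 0 < t → HasDerivAt F
      ((∑ n, w t n * u' t n) * Real.exp (k * t) + W t * (Real.exp (k * t) * k)) t := by
    intro t ht
    have hu_t : HasDerivAt u (u' t) t := (hderiv t ht.le).hasDerivAt (Ici_mem_nhds ht)
    have hcomp : ∀ n, HasDerivAt (fun s => u s n) (u' t n) t := fun n => hasDerivAt_pi.1 hu_t n
    have hWd : HasDerivAt W (∑ n, w t n * u' t n) t := by
      have hterm : ∀ n ∈ Finset.univ, HasDerivAt (fun s => G n (u s n)) (w t n * u' t n) t := by
        intro n _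
        have h1 : HasDerivAt (G n)
            (if astar n = 0 then Sl lam (u t n) else u t n - ustar n) (u t n) := by
          by_cases h : astar n = 0
          · have e : G n = fun v => (max (v - lam) 0 ^ 2 + min (v + lam) 0 ^ 2) / 2 := by
              funext v; rw [hG_n, if_pos h]
            rw [e, if_pos h]
            have hmax : HasDerivAt (fun v : ℝ => max (v - lam) 0 ^ 2)
                (2 * max (u t n - lam) 0) (u t n) := by
              have := (hasDerivAt_maxsq (u t n - lam)).comp (u t n)
                ((hasDerivAt_id (u t n)).sub_const lam)
              exact this.congr_deriv (mul_one _)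
            have hmin : HasDerivAt (fun v : ℝ => min (v + lam) 0 ^ 2)
                (2 * min (u t n + lam) 0) (u t n) := by
              have := (hasDerivAt_minsq (u t n + lam)).comp (u t n)
                ((hasDerivAt_id (u t n)).add_const lam)
              exact this.congr_deriv (mul_one _)
            have := (hmax.add hmin).div_const 2
            refine this.congr_deriv ?_
            rw [Sl_eq_maxmin hlam0]
            ring
          · have e : G n = fun v => (v - ustar n) ^ 2 / 2 := by
              funext v; rw [hG_n, if_neg h]
            rw [e, if_neg h]
            have := (((hasDerivAt_id (u t n)).sub_const (ustar n)).pow 2).div_const 2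
            refine this.congr_deriv ?_
            simp
        have h2 := h1.comp t (hcomp n)
        have e : w t n = (if astar n = 0 then Sl lam (u t n) else u t n - ustar n) := hw_n t n
        rw [e]
        exact h2
      exact HasDerivAt.fun_sum hterm
    have hexp : HasDerivAt (fun s : ℝ => Real.exp (k * s)) (Real.exp (k * t) * k) t := by
      have h0 : HasDerivAt (fun s : ℝ => k * s) k t := by
        simpa using (hasDerivAt_id t).const_mul k
      exact (Real.hasDerivAt_exp (k * t)).comp t h0
    exact hWd.mul hexp
  have hFanti : AntitoneOn F (Set.Ici 0) := by
    apply antitoneOn_of_deriv_nonpos (convex_Ici 0)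
    · exact hWcont.mul (Real.continuous_exp.comp (continuous_const.mul continuous_id)).continuousOn
    · intro x hx
      rw [interior_Ici] at hx
      exact (hF_deriv x hx).differentiableAt.differentiableWithinAt
    · intro x hx
      rw [interior_Ici] at hx
      rw [(hF_deriv x hx).deriv]
      have hb := hmain x hx.le
      have he : (0:ℝ) < Real.exp (k * x) := Real.exp_pos _
      have hb2 : (∑ n, w x n * u' x n) ≤ -k * W x := by
        rw [hk_def]
        have := hb
        linarith [this]
      nlinarith [mul_le_mul_of_nonneg_right hb2 he.le]
  -- conclusion
  intro t ht
  have hFt : F t ≤ F 0 := hFanti Set.self_mem_Ici (Set.mem_Ici.2 ht) ht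
  have hF0 : F 0 = W 0 := by
    have : F 0 = W 0 * Real.exp (k * 0) := rfl
    rw [this, mul_zero, Real.exp_zero, mul_one]
  have hEt : (0:ℝ) < Real.exp (k * t) := Real.exp_pos _
  have hWt : W t ≤ W 0 * Real.exp (-(k * t)) := by
    have h1 : W t * Real.exp (k * t) ≤ W 0 := by
      rw [← hF0]
      exact hFt
    rw [Real.exp_neg, ← div_eq_mul_inv, le_div_iff₀ hEt]
    exact h1
  set S0 : ℝ := ∑ n, (u 0 n - ustar n) ^ 2 with hS0_def
  have hS0nn : (0:ℝ) ≤ S0 := Finset.sum_nonneg fun n _ => sq_nonneg _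
  have hW0 : 2 * W 0 ≤ S0 := by
    rw [hWval 0]
    have hle : ∀ n, w 0 n ^ 2 ≤ (u 0 n - ustar n) ^ 2 := by
      intro n
      by_cases h : astar n = 0
      · rw [hw_n, if_pos h]
        have e3 : Sl lam (ustar n) = 0 := Sl_of_abs_le (hustar_mid n h)
        have h1 : |Sl lam (u 0 n)| ≤ |u 0 n - ustar n| := by
          have := Sl_abs_sub hlam0 (u 0 n) (ustar n)
          rwa [e3, sub_zero] at this
        calc Sl lam (u 0 n) ^ 2 = |Sl lam (u 0 n)| ^ 2 := (sq_abs _).symm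
          _ ≤ |u 0 n - ustar n| ^ 2 := pow_le_pow_left₀ (abs_nonneg _) h1 2
          _ = (u 0 n - ustar n) ^ 2 := sq_abs _
      · rw [hw_n, if_neg h]
    have := Finset.sum_le_sum fun n (_ : n ∈ Finset.univ) => hle n
    rw [hS0_def]
    linarith [this]
  have hzsum : (∑ n, (Tl lam f (u t n) - Tl lam f (ustar n)) ^ 2)
      ≤ α ^ 2 * S0 * Real.exp (-(k * t)) := by
    have e : ∀ n, (Tl lam f (u t n) - Tl lam f (ustar n)) ^ 2 = z t n ^ 2 := by
      intro n
      rw [hz_n]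
    calc (∑ n, (Tl lam f (u t n) - Tl lam f (ustar n)) ^ 2)
        = ∑ n, z t n ^ 2 := Finset.sum_congr rfl fun n _ => e n
      _ ≤ α ^ 2 * ∑ n, w t n ^ 2 := by
          rw [Finset.mul_sum]
          exact Finset.sum_le_sum fun n _ => hzw2 t n
      _ = α ^ 2 * (2 * W t) := by rw [hWval t]; ring
      _ ≤ α ^ 2 * (2 * (W 0 * Real.exp (-(k * t)))) := by
          have h2 : 2 * W t ≤ 2 * (W 0 * Real.exp (-(k * t))) := by linarith [hWt]
          exact mul_le_mul_of_nonneg_left h2 (sq_nonneg α)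
      _ ≤ α ^ 2 * S0 * Real.exp (-(k * t)) := by
          nlinarith [hW0, Real.exp_pos (-(k * t)), sq_nonneg α,
            mul_nonneg (mul_nonneg (sq_nonneg α) (sub_nonneg.2 hW0)) (Real.exp_pos (-(k * t))).le]
  have hR : (0:ℝ) ≤ α * Real.sqrt S0 * Real.exp (-c * t / τ) := by positivity
  have hR2 : (α * Real.sqrt S0 * Real.exp (-c * t / τ)) ^ 2
      = α ^ 2 * S0 * Real.exp (-(k * t)) := by
    rw [mul_pow, mul_pow, Real.sq_sqrt hS0nn, sq (Real.exp _), ← Real.exp_add]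
    congr 1
    rw [hk_def]
    field_simp
    ring
  calc Real.sqrt (∑ n, (Tl lam f (u t n) - Tl lam f (ustar n)) ^ 2)
      ≤ Real.sqrt ((α * Real.sqrt S0 * Real.exp (-c * t / τ)) ^ 2) :=
        Real.sqrt_le_sqrt (by rw [hR2]; exact hzsum)
    _ = α * Real.sqrt S0 * Real.exp (-c * t / τ) := Real.sqrt_sq hR
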